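/- For every c > 0 and every τ ∈ ℝ, one has lim_{t→−∞} e^{ct} M(τ+t, θ_t ω)² = 0, where M(σ, ω)² = ∫_{−∞}^{0} e^{λs} e^{−2αω(s)} (1 + h(s+σ)) ds and (θ_t ω)(s) = ω(s+t) − ω(t). In particular, the family of closed balls K(τ,ω) = { u ∈ L²(ℝⁿ) : ‖u‖ ≤ c₀ M(τ,ω) } (for any fixed constant c₀ > 0) is tempered. -/

import Mathlib

open Set MeasureTheory Filter Topology ENNReal

noncomputable section

/-- The shifted Wiener path `(θ_t ω)(s) = ω(s+t) - ω(t)`. -/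
def pathShift (t : ℝ) (ω : ℝ → ℝ) : ℝ → ℝ := fun s => ω (s + t) - ω t

/-- `M(σ,ω)² = ∫_{-∞}^{0} e^{λs} e^{-2αω(s)} (1 + h(s+σ)) ds`, the squared radius of the
pullback absorbing ball. -/
def M2 (lam α : ℝ) (h : ℝ → ℝ) (σ : ℝ) (w : ℝ → ℝ) : ℝ≥0∞ :=
  ∫⁻ s in Iic (0:ℝ),
    ENNReal.ofReal (Real.exp (lam * s) * Real.exp (-2 * α * w s) * (1 + h (s + σ)))

/-- The space `L²(ℝⁿ)`. -/
abbrev L2Space (n : ℕ) : Type :=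
  MeasureTheory.Lp ℝ 2 (volume : Measure (EuclideanSpace ℝ (Fin n)))

/-- A continuous function that is sublinear at `±∞` satisfies a global bound
`|ω r| ≤ ε |r| + C`. -/
lemma sublinear_bound (ω : ℝ → ℝ) (hω : Continuous ω)
    (hbot : Tendsto (fun t => ω t / t) atBot (𝓝 0))
    (htop : Tendsto (fun t => ω t / t) atTop (𝓝 0))
    {ε : ℝ} (hε : 0 < ε) : ∃ C : ℝ, 0 ≤ C ∧ ∀ r, |ω r| ≤ ε * |r| + C := by
  have hb : ∀ᶠ t in atBot, |ω t / t| ≤ ε := by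
    have h1 := Metric.tendsto_nhds.1 hbot ε hε
    filter_upwards [h1] with t ht
    rw [Real.dist_eq, sub_zero] at ht; exact ht.le
  have ht' : ∀ᶠ t in atTop, |ω t / t| ≤ ε := by
    have h1 := Metric.tendsto_nhds.1 htop ε hε
    filter_upwards [h1] with t ht
    rw [Real.dist_eq, sub_zero] at ht; exact ht.le
  obtain ⟨A, hA⟩ := eventually_atBot.1 hb
  obtain ⟨B, hB⟩ := eventually_atTop.1 ht'
  set A' : ℝ := min A (-1) with hA'
  set B' : ℝ := max B 1 with hB'
  obtain ⟨C, hC⟩ := isCompact_Icc.exists_bound_of_continuousOn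
    (s := Icc A' B') hω.continuousOn
  refine ⟨max C 0, le_max_right _ _, fun r => ?_⟩
  have hεr : 0 ≤ ε * |r| := mul_nonneg hε.le (abs_nonneg _)
  rcases le_or_gt r A' with hr | hr
  · have hrA : r ≤ A := hr.trans (min_le_left _ _)
    have hrneg : r ≤ -1 := hr.trans (min_le_right _ _)
    have hr0 : r ≠ 0 := by linarith
    have := hA r hrA
    have habs : |ω r| = |ω r / r| * |r| := by
      rw [abs_div, div_mul_cancel₀ _ (abs_ne_zero.2 hr0)]
    have : |ω r| ≤ ε * |r| := by
      rw [habs]; exact mul_le_mul_of_nonneg_right this (abs_nonneg _)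
    linarith [le_max_right C 0]
  rcases le_or_gt B' r with hr2 | hr2
  · have hrB : B ≤ r := (le_max_left _ _).trans hr2
    have hrpos : (1:ℝ) ≤ r := (le_max_right _ _).trans hr2
    have hr0 : r ≠ 0 := by linarith
    have := hB r hrB
    have habs : |ω r| = |ω r / r| * |r| := by
      rw [abs_div, div_mul_cancel₀ _ (abs_ne_zero.2 hr0)]
    have : |ω r| ≤ ε * |r| := by
      rw [habs]; exact mul_le_mul_of_nonneg_right this (abs_nonneg _)
    linarith [le_max_right C 0]
  · have hmem : r ∈ Icc A' B' := ⟨hr.le, hr2.le⟩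
    have := hC r hmem
    have : |ω r| ≤ C := by simpa [Real.norm_eq_abs] using this
    have : |ω r| ≤ max C 0 := this.trans (le_max_left _ _)
    linarith

set_option maxHeartbeats 2000000 in
/-- If `h` is tempered, then `e^{ct} M(τ+t, θ_t ω)² → 0` as `t → -∞` for all
`c > 0` and `τ ∈ ℝ`; in particular the family of closed balls in `L²(ℝⁿ)` of radii
`c₀ M(τ,ω)` is tempered. -/
theorem absorbing_radius_tempered
    (lam α δ : ℝ) (hlam : 0 < lam) (hα : 0 < α) (hδ0 : 0 ≤ δ) (hδ : δ < lam)
    (ω : ℝ → ℝ) (hω : Continuous ω)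
    (hωbot : Tendsto (fun t => ω t / t) atBot (𝓝 0))
    (hωtop : Tendsto (fun t => ω t / t) atTop (𝓝 0))
    (h : ℝ → ℝ) (hmeas : Measurable h) (hpos : ∀ s, 0 ≤ h s)
    (hloc : LocallyIntegrable h volume)
    (htemp : ∀ c > (0:ℝ),
        Tendsto (fun t => ENNReal.ofReal (Real.exp (c * t)) *
            ∫⁻ s in Iic (0:ℝ), ENNReal.ofReal (Real.exp (δ * s) * h (s + t)))
          atBot (𝓝 0)) :
    (∀ c > (0:ℝ), ∀ τ : ℝ,
        Tendsto (fun t => ENNReal.ofReal (Real.exp (c * t)) *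
            M2 lam α h (τ + t) (pathShift t ω))
          atBot (𝓝 0)) ∧
    (∀ (n : ℕ) (c₀ : ℝ), 0 < c₀ → ∀ c > (0:ℝ), ∀ τ : ℝ,
        Tendsto (fun t => Real.exp (c * t) *
            sSup ((fun u => ‖u‖) ''
              {u : L2Space n |
                ‖u‖ ≤ c₀ * Real.sqrt (M2 lam α h (τ + t) (pathShift t ω)).toReal}))
          atBot (𝓝 0)) := by
  have part1 : ∀ c > (0:ℝ), ∀ τ : ℝ,
      Tendsto (fun t => ENNReal.ofReal (Real.exp (c * t)) *
          M2 lam α h (τ + t) (pathShift t ω)) atBot (𝓝 0) := by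
    intro c hc τ
    set ε : ℝ := min ((lam - δ) / (4 * α)) (c / (8 * α)) with hεdef
    have hε : 0 < ε := lt_min (div_pos (by linarith) (by positivity)) (by positivity)
    have hε1 : 2 * α * ε ≤ (lam - δ) / 2 := by
      have h1 : ε ≤ (lam - δ) / (4 * α) := min_le_left _ _
      have h2 : 2 * α * ε ≤ 2 * α * ((lam - δ) / (4 * α)) :=
        mul_le_mul_of_nonneg_left h1 (by positivity)
      have h3 : 2 * α * ((lam - δ) / (4 * α)) = (lam - δ) / 2 := by
        field_simp; ring
      linarith
    have hε2 : 4 * α * ε ≤ c / 2 := by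
      have h1 : ε ≤ c / (8 * α) := min_le_right _ _
      have h2 : 4 * α * ε ≤ 4 * α * (c / (8 * α)) :=
        mul_le_mul_of_nonneg_left h1 (by positivity)
      have h3 : 4 * α * (c / (8 * α)) = c / 2 := by
        field_simp; ring
      linarith
    set k : ℝ := lam - 2 * α * ε with hkdef
    have hk : 0 < k := by
      have : 2 * α * ε ≤ (lam - δ) / 2 := hε1
      simp only [hkdef]; linarith
    have hkδ : δ ≤ k := by simp only [hkdef]; linarith
    set d : ℝ := c - 4 * α * ε with hddef
    have hd : c / 2 ≤ d := by simp only [hddef]; linarith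
    have hd0 : 0 < d := by linarith
    obtain ⟨C, hC0, hC⟩ := sublinear_bound ω hω hωbot hωtop hε
    set A : ℝ≥0∞ := ∫⁻ s in Iic (0:ℝ), ENNReal.ofReal (Real.exp (k * s)) with hAdef
    set I : ℝ → ℝ≥0∞ :=
      fun σ => ∫⁻ s in Iic (0:ℝ), ENNReal.ofReal (Real.exp (δ * s) * h (s + σ)) with hIdef
    -- finiteness of A
    have hAfin : A ≠ ∞ := by
      have h1 : Integrable ((Iic (0:ℝ)).indicator Real.exp) :=
        (integrableOn_exp_Iic 0).integrable_indicator measurableSet_Iic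
      have h2 := h1.comp_mul_left' hk.ne'
      have h3 : (fun x => (Iic (0:ℝ)).indicator Real.exp (k * x)) =
          (Iic (0:ℝ)).indicator (fun s => Real.exp (k * s)) := by
        funext x
        have hiff : k * x ≤ 0 ↔ x ≤ 0 := by
          constructor <;> intro hx <;> nlinarith
        by_cases hx : x ≤ 0
        · simp [Set.indicator_apply, mem_Iic, hx, hiff.2 hx]
        · have : ¬ k * x ≤ 0 := fun hkx => hx (hiff.1 hkx)
          simp [Set.indicator_apply, mem_Iic, hx, this]
        
      rw [h3] at h2
      have hint : IntegrableOn (fun s => Real.exp (k * s)) (Iic (0:ℝ)) :=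
        (integrable_indicator_iff measurableSet_Iic).1 h2
      exact hint.lintegral_lt_top.ne
    -- key pointwise bound
    have key : ∀ t ≤ (0:ℝ),
        ENNReal.ofReal (Real.exp (c * t)) * M2 lam α h (τ + t) (pathShift t ω) ≤
        ENNReal.ofReal (Real.exp (4 * α * C + d * t)) * (A + I (τ + t)) := by
      intro t ht
      rw [M2, ← lintegral_const_mul' _ _ ofReal_ne_top]
      have step : ∀ s ∈ Iic (0:ℝ),
          ENNReal.ofReal (Real.exp (c * t)) *
            ENNReal.ofReal (Real.exp (lam * s) * Real.exp (-2 * α * pathShift t ω s) *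
              (1 + h (s + (τ + t)))) ≤
          ENNReal.ofReal (Real.exp (4 * α * C + d * t)) *
            (ENNReal.ofReal (Real.exp (k * s)) +
             ENNReal.ofReal (Real.exp (δ * s) * h (s + (τ + t)))) := by
        intro s hs
        have hs0 : s ≤ 0 := hs
        have hst : |s + t| = -s - t := by
          rw [abs_of_nonpos (by linarith)]; ring
        have htabs : |t| = -t := abs_of_nonpos ht
        have h1 := hC (s + t)
        have h2 := hC t
        have hw : -2 * α * pathShift t ω s ≤
            2 * α * ε * (-s) + 4 * α * ε * (-t) + 4 * α * C := by
          have habs : -(ω (s + t) - ω t) ≤ |ω (s + t)| + |ω t| := by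
            have := abs_sub (ω (s + t)) (ω t)
            have h4 : |ω (s + t) - ω t| ≤ |ω (s + t)| + |ω t| := abs_sub _ _
            have := neg_abs_le (ω (s + t) - ω t)
            linarith
          have hb : |ω (s + t)| + |ω t| ≤ ε * (-s - t) + ε * (-t) + 2 * C := by
            rw [hst] at h1; rw [htabs] at h2; linarith
          have : -(ω (s + t) - ω t) ≤ ε * (-s - t) + ε * (-t) + 2 * C :=
            habs.trans hb
          simp only [pathShift]
          nlinarith
        have hexp : c * t + (lam * s + (-2 * α * pathShift t ω s)) ≤
            4 * α * C + d * t + k * s := by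
          simp only [hddef, hkdef] at *
          nlinarith
        have hreal : Real.exp (c * t) *
            (Real.exp (lam * s) * Real.exp (-2 * α * pathShift t ω s) *
              (1 + h (s + (τ + t)))) ≤
            Real.exp (4 * α * C + d * t) *
              (Real.exp (k * s) + Real.exp (δ * s) * h (s + (τ + t))) := by
          have h1pos : (0:ℝ) ≤ 1 + h (s + (τ + t)) := by linarith [hpos (s + (τ + t))]
          have e1 : Real.exp (c * t) *
              (Real.exp (lam * s) * Real.exp (-2 * α * pathShift t ω s) *
                (1 + h (s + (τ + t)))) =
              Real.exp (c * t + (lam * s + (-2 * α * pathShift t ω s))) *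
                (1 + h (s + (τ + t))) := by
            rw [Real.exp_add, Real.exp_add]; ring
          have e2 : Real.exp (c * t + (lam * s + (-2 * α * pathShift t ω s))) *
                (1 + h (s + (τ + t))) ≤
              Real.exp (4 * α * C + d * t + k * s) * (1 + h (s + (τ + t))) :=
            mul_le_mul_of_nonneg_right (Real.exp_le_exp.2 hexp) h1pos
          have e3 : Real.exp (4 * α * C + d * t + k * s) * (1 + h (s + (τ + t))) =
              Real.exp (4 * α * C + d * t) *
                (Real.exp (k * s) + Real.exp (k * s) * h (s + (τ + t))) := by
            rw [Real.exp_add]; ring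
          have e4 : Real.exp (k * s) ≤ Real.exp (δ * s) :=
            Real.exp_le_exp.2 (mul_le_mul_of_nonpos_right hkδ hs0)
          have e5 : Real.exp (k * s) * h (s + (τ + t)) ≤
              Real.exp (δ * s) * h (s + (τ + t)) :=
            mul_le_mul_of_nonneg_right e4 (hpos _)
          have e6 : Real.exp (4 * α * C + d * t) *
                (Real.exp (k * s) + Real.exp (k * s) * h (s + (τ + t))) ≤
              Real.exp (4 * α * C + d * t) *
                (Real.exp (k * s) + Real.exp (δ * s) * h (s + (τ + t))) := by
            apply mul_le_mul_of_nonneg_left _ (Real.exp_nonneg _)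
            linarith
          calc Real.exp (c * t) *
              (Real.exp (lam * s) * Real.exp (-2 * α * pathShift t ω s) *
                (1 + h (s + (τ + t))))
              = Real.exp (c * t + (lam * s + (-2 * α * pathShift t ω s))) *
                (1 + h (s + (τ + t))) := e1
            _ ≤ Real.exp (4 * α * C + d * t + k * s) * (1 + h (s + (τ + t))) := e2
            _ = Real.exp (4 * α * C + d * t) *
                (Real.exp (k * s) + Real.exp (k * s) * h (s + (τ + t))) := e3
            _ ≤ _ := e6
        calc ENNReal.ofReal (Real.exp (c * t)) *
            ENNReal.ofReal (Real.exp (lam * s) * Real.exp (-2 * α * pathShift t ω s) *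
              (1 + h (s + (τ + t))))
            = ENNReal.ofReal (Real.exp (c * t) *
              (Real.exp (lam * s) * Real.exp (-2 * α * pathShift t ω s) *
                (1 + h (s + (τ + t))))) := (ENNReal.ofReal_mul (Real.exp_nonneg _)).symm
          _ ≤ ENNReal.ofReal (Real.exp (4 * α * C + d * t) *
              (Real.exp (k * s) + Real.exp (δ * s) * h (s + (τ + t)))) :=
              ENNReal.ofReal_le_ofReal hreal
          _ = ENNReal.ofReal (Real.exp (4 * α * C + d * t)) *
              ENNReal.ofReal (Real.exp (k * s) + Real.exp (δ * s) * h (s + (τ + t))) :=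
              ENNReal.ofReal_mul (Real.exp_nonneg _)
          _ = ENNReal.ofReal (Real.exp (4 * α * C + d * t)) *
              (ENNReal.ofReal (Real.exp (k * s)) +
               ENNReal.ofReal (Real.exp (δ * s) * h (s + (τ + t)))) := by
              rw [ENNReal.ofReal_add (Real.exp_nonneg _)
                (mul_nonneg (Real.exp_nonneg _) (hpos _))]
      calc ∫⁻ s in Iic (0:ℝ), ENNReal.ofReal (Real.exp (c * t)) *
            ENNReal.ofReal (Real.exp (lam * s) * Real.exp (-2 * α * pathShift t ω s) *
              (1 + h (s + (τ + t))))
          ≤ ∫⁻ s in Iic (0:ℝ), ENNReal.ofReal (Real.exp (4 * α * C + d * t)) *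
            (ENNReal.ofReal (Real.exp (k * s)) +
             ENNReal.ofReal (Real.exp (δ * s) * h (s + (τ + t)))) :=
            setLIntegral_mono' measurableSet_Iic step
        _ = ENNReal.ofReal (Real.exp (4 * α * C + d * t)) * (A + I (τ + t)) := by
            rw [lintegral_const_mul' _ _ ofReal_ne_top,
              lintegral_add_left (by fun_prop)]
    -- the dominating function tends to 0
    have hexp_d : Tendsto (fun t => ENNReal.ofReal (Real.exp (4 * α * C + d * t)))
        atBot (𝓝 0) := by
      have h1 : Tendsto (fun t : ℝ => 4 * α * C + d * t) atBot atBot :=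
        tendsto_atBot_add_const_left _ _
          ((tendsto_const_mul_atBot_of_pos hd0).2 tendsto_id)
      have h2 : Tendsto (fun t => Real.exp (4 * α * C + d * t)) atBot (𝓝 0) :=
        Real.tendsto_exp_atBot.comp h1
      have h3 := (ENNReal.continuous_ofReal.tendsto 0).comp h2
      simpa only [Function.comp_def, ENNReal.ofReal_zero] using h3
    have hterm1 : Tendsto (fun t => ENNReal.ofReal (Real.exp (4 * α * C + d * t)) * A)
        atBot (𝓝 0) := by
      simpa using ENNReal.Tendsto.mul_const hexp_d (Or.inr hAfin)
    have hG : Tendsto (fun t => ENNReal.ofReal (Real.exp (c / 2 * (τ + t))) * I (τ + t))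
        atBot (𝓝 0) := by
      have h1 := htemp (c / 2) (by positivity)
      have h2 : Tendsto (fun t : ℝ => τ + t) atBot atBot :=
        tendsto_atBot_add_const_left _ _ tendsto_id
      exact h1.comp h2
    have hterm2 : Tendsto (fun t => ENNReal.ofReal (Real.exp (4 * α * C - c / 2 * τ)) *
        (ENNReal.ofReal (Real.exp (c / 2 * (τ + t))) * I (τ + t))) atBot (𝓝 0) := by
      simpa using ENNReal.Tendsto.const_mul hG (Or.inr (by simp))
    have hΦ : Tendsto (fun t => ENNReal.ofReal (Real.exp (4 * α * C + d * t)) * A +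
        ENNReal.ofReal (Real.exp (4 * α * C - c / 2 * τ)) *
          (ENNReal.ofReal (Real.exp (c / 2 * (τ + t))) * I (τ + t))) atBot (𝓝 0) := by
      simpa using hterm1.add hterm2
    -- squeeze
    apply tendsto_of_tendsto_of_tendsto_of_le_of_le' tendsto_const_nhds hΦ
    · exact Eventually.of_forall fun t => zero_le
    · filter_upwards [eventually_le_atBot (0:ℝ)] with t ht
      have h1 := key t ht
      have h2 : ENNReal.ofReal (Real.exp (4 * α * C + d * t)) * I (τ + t) ≤
          ENNReal.ofReal (Real.exp (4 * α * C - c / 2 * τ)) *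
            (ENNReal.ofReal (Real.exp (c / 2 * (τ + t))) * I (τ + t)) := by
        rw [← mul_assoc, ← ENNReal.ofReal_mul (Real.exp_nonneg _), ← Real.exp_add]
        apply mul_le_mul_left
        apply ENNReal.ofReal_le_ofReal
        apply Real.exp_le_exp.2
        nlinarith
      calc ENNReal.ofReal (Real.exp (c * t)) * M2 lam α h (τ + t) (pathShift t ω)
          ≤ ENNReal.ofReal (Real.exp (4 * α * C + d * t)) * (A + I (τ + t)) := h1
        _ = ENNReal.ofReal (Real.exp (4 * α * C + d * t)) * A +
            ENNReal.ofReal (Real.exp (4 * α * C + d * t)) * I (τ + t) := by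
            rw [mul_add]
        _ ≤ _ := add_le_add_right h2 _
  refine ⟨part1, ?_⟩
  intro n c₀ hc₀ c hc τ
  set R : ℝ → ℝ := fun t => c₀ * Real.sqrt (M2 lam α h (τ + t) (pathShift t ω)).toReal
    with hRdef
  have hR0 : ∀ t, 0 ≤ R t := fun t => mul_nonneg hc₀.le (Real.sqrt_nonneg _)
  have hmem : ∀ t, ‖(0 : L2Space n)‖ ∈
      (fun u => ‖u‖) '' {u : L2Space n | ‖u‖ ≤ R t} := by
    intro t
    exact mem_image_of_mem _ (by simp [hR0 t])
  have hbdd : ∀ t, ∀ y ∈ (fun u => ‖u‖) '' {u : L2Space n | ‖u‖ ≤ R t}, y ≤ R t := by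
    rintro t y ⟨u, hu, rfl⟩; exact hu
  have hsup_le : ∀ t, sSup ((fun u => ‖u‖) '' {u : L2Space n | ‖u‖ ≤ R t}) ≤ R t :=
    fun t => csSup_le ⟨_, hmem t⟩ (hbdd t)
  have hsup_nonneg : ∀ t,
      0 ≤ sSup ((fun u => ‖u‖) '' {u : L2Space n | ‖u‖ ≤ R t}) := by
    intro t
    have hb : BddAbove ((fun u => ‖u‖) '' {u : L2Space n | ‖u‖ ≤ R t}) :=
      ⟨R t, fun y hy => hbdd t y hy⟩
    have := le_csSup hb (hmem t)
    simpa using this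
  have h2c := part1 (2 * c) (by linarith) τ
  have hto : Tendsto (fun t => (ENNReal.ofReal (Real.exp (2 * c * t)) *
      M2 lam α h (τ + t) (pathShift t ω)).toReal) atBot (𝓝 0) := by
    have := (ENNReal.tendsto_toReal (a := 0) (by simp)).comp h2c
    simpa only [Function.comp_def, ENNReal.toReal_zero] using this
  have hsq : Tendsto (fun t => Real.sqrt ((ENNReal.ofReal (Real.exp (2 * c * t)) *
      M2 lam α h (τ + t) (pathShift t ω)).toReal)) atBot (𝓝 0) := by
    have := (Real.continuous_sqrt.tendsto 0).comp hto
    simpa only [Function.comp_def, Real.sqrt_zero] using this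
  have hg : Tendsto (fun t => c₀ * Real.sqrt ((ENNReal.ofReal (Real.exp (2 * c * t)) *
      M2 lam α h (τ + t) (pathShift t ω)).toReal)) atBot (𝓝 0) := by
    simpa only [mul_zero] using hsq.const_mul c₀
  have hiden : ∀ t, Real.exp (c * t) * R t =
      c₀ * Real.sqrt ((ENNReal.ofReal (Real.exp (2 * c * t)) *
        M2 lam α h (τ + t) (pathShift t ω)).toReal) := by
    intro t
    rw [ENNReal.toReal_mul, ENNReal.toReal_ofReal (Real.exp_nonneg _),
      Real.sqrt_mul (Real.exp_nonneg _)]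
    have : Real.sqrt (Real.exp (2 * c * t)) = Real.exp (c * t) := by
      have : Real.exp (2 * c * t) = Real.exp (c * t) ^ 2 := by
        rw [← Real.exp_nat_mul]; ring_nf
      rw [this, Real.sqrt_sq (Real.exp_nonneg _)]
    rw [this, hRdef]; ring
  apply squeeze_zero' (Eventually.of_forall fun t =>
      mul_nonneg (Real.exp_nonneg _) (hsup_nonneg t))
    (g := fun t => Real.exp (c * t) * R t)
    (Eventually.of_forall fun t =>
      mul_le_mul_of_nonneg_left (hsup_le t) (Real.exp_nonneg _))
  have : (fun t => Real.exp (c * t) * R t) =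
      fun t => c₀ * Real.sqrt ((ENNReal.ofReal (Real.exp (2 * c * t)) *
        M2 lam α h (τ + t) (pathShift t ω)).toReal) := funext hiden
  rw [this]
  exact hg

end
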